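/- Let G be an abelian group with no elements of order 4. Then there exists a colouring of G with countably many colours such that there do not exist distinct elements x, y ∈ G with 2x, 2y, and x+y all receiving the same colour. -/

import Mathlib

namespace Stmt0Aux

open Classical

variable {N : Type*} [AddCommGroup N]

/-- The 2-saturation of the subgroup generated by `S`. -/
def sat (S : Set N) : AddSubgroup N where
  carrier := {x | ∃ j : ℕ, (2 ^ j : ℕ) • x ∈ AddSubgroup.closure S}
  zero_mem' := ⟨0, by simpa using zero_mem _⟩
  add_mem' := by
    rintro a b ⟨j, hj⟩ ⟨k, hk⟩
    refine ⟨j + k, ?_⟩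
    rw [smul_add]
    refine add_mem ?_ ?_
    · rw [pow_add, mul_comm, mul_smul]
      exact AddSubgroup.nsmul_mem _ hj _
    · rw [pow_add, mul_smul]
      exact AddSubgroup.nsmul_mem _ hk _
  neg_mem' := by
    rintro a ⟨j, hj⟩
    exact ⟨j, by rw [smul_neg]; exact neg_mem hj⟩

lemma mem_sat_of_mem_closure {S : Set N} {x : N} (h : x ∈ AddSubgroup.closure S) :
    x ∈ sat S := ⟨0, by simpa using h⟩

lemma sat_absorb {S : Set N} {x : N} (j : ℕ) (h : (2 ^ j : ℕ) • x ∈ sat S) : x ∈ sat S := by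
  obtain ⟨k, hk⟩ := h
  exact ⟨k + j, by rwa [pow_add, mul_smul]⟩

lemma sat_mono {S T : Set N} (h : S ⊆ T) : sat S ≤ sat T := by
  rintro x ⟨j, hj⟩
  exact ⟨j, AddSubgroup.closure_mono h hj⟩

/-- Every element of a closure is in the closure of a finite subset. -/
lemma mem_closure_finset {S : Set N} {x : N} (hx : x ∈ AddSubgroup.closure S) :
    ∃ F : Finset N, ↑F ⊆ S ∧ x ∈ AddSubgroup.closure (F : Set N) := by
  refine AddSubgroup.closure_induction (p := fun y _ =>
    ∃ F : Finset N, ↑F ⊆ S ∧ y ∈ AddSubgroup.closure (F : Set N)) ?_ ?_ ?_ ?_ hx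
  · intro y hy
    exact ⟨{y}, by simpa using hy, AddSubgroup.subset_closure (by simp)⟩
  · exact ⟨∅, by simp, zero_mem _⟩
  · rintro a b _ _ ⟨F₁, hF₁, ha⟩ ⟨F₂, hF₂, hb⟩
    refine ⟨F₁ ∪ F₂, by simp [Set.union_subset_iff, hF₁, hF₂], add_mem ?_ ?_⟩
    · exact AddSubgroup.closure_mono (by simp) ha
    · exact AddSubgroup.closure_mono (by simp) hb
  · rintro a _ ⟨F, hF, ha⟩
    exact ⟨F, hF, neg_mem ha⟩

lemma rwf : WellFounded (@WellOrderingRel N) := IsWellFounded.wf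

lemma rtrans : ∀ {a b c : N}, WellOrderingRel a b → WellOrderingRel b c →
    WellOrderingRel a c := fun h1 h2 => _root_.trans h1 h2

/-- A finite set is empty or has a maximum for the well-ordering relation. -/
lemma finset_rmax (F : Finset N) :
    F = ∅ ∨ ∃ b ∈ F, ∀ x ∈ F, WellOrderingRel x b ∨ x = b := by
  classical
  induction F using Finset.cons_induction with
  | empty => exact Or.inl rfl
  | cons a F ha IH =>
    right
    rcases IH with rfl | ⟨b, hbF, hmax⟩
    · exact ⟨a, by simp, by simp⟩
    · rcases trichotomous (r := @WellOrderingRel N) a b with h | h | h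
      · refine ⟨b, by simp [hbF], ?_⟩
        intro x hx
        rcases Finset.mem_cons.mp hx with rfl | hx
        · exact Or.inl h
        · exact hmax x hx
      · subst h
        refine ⟨a, by simp, ?_⟩
        intro x hx
        rcases Finset.mem_cons.mp hx with rfl | hx
        · exact Or.inr rfl
        · exact hmax x hx
      · refine ⟨a, by simp, ?_⟩
        intro x hx
        rcases Finset.mem_cons.mp hx with rfl | hx
        · exact Or.inr rfl
        · rcases hmax x hx with h' | rfl
          · exact Or.inl (rtrans h' h)
          · exact Or.inl h

/-- Saturated subgroup generated by everything `< a`. -/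
def Hlt (a : N) : AddSubgroup N := sat {b | WellOrderingRel b a}

/-- Saturated subgroup generated by everything `≤ a`. -/
def Hle (a : N) : AddSubgroup N := sat {b | WellOrderingRel b a ∨ b = a}

lemma Hlt_le_Hle (a : N) : Hlt a ≤ Hle a := sat_mono (fun _ hb => Or.inl hb)

lemma Hle_le_Hlt {a b : N} (h : WellOrderingRel a b) : Hle a ≤ Hlt b := by
  refine sat_mono (fun c hc => ?_)
  rcases hc with h' | rfl
  · exact rtrans h' h
  · exact h

lemma Hlt_absorb {a : N} {x : N} (j : ℕ) (h : (2 ^ j : ℕ) • x ∈ Hlt a) : x ∈ Hlt a :=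
  sat_absorb j h

lemma Hlt_absorb2 {a : N} {x : N} (h : (2 : ℕ) • x ∈ Hlt a) : x ∈ Hlt a :=
  Hlt_absorb 1 (by simpa using h)

lemma mem_Hle_self (g : N) : g ∈ Hle g :=
  mem_sat_of_mem_closure (AddSubgroup.subset_closure (Or.inr rfl))

/-- Birthday of `g`: the least `a` with `g ∈ Hle a`. -/
noncomputable def bday (g : N) : N :=
  (rwf).min {a | g ∈ Hle a} ⟨g, mem_Hle_self g⟩

lemma mem_Hle_bday (g : N) : g ∈ Hle (bday g) :=
  WellFounded.min_mem rwf {a | g ∈ Hle a} ⟨g, mem_Hle_self g⟩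

lemma bday_not_lt {g a : N} (h : g ∈ Hle a) : ¬ WellOrderingRel a (bday g) :=
  WellFounded.not_lt_min rwf {a | g ∈ Hle a} h

lemma h2pow (h2 : ∀ a : N, (2 : ℕ) • a = 0 → a = 0) : ∀ (j : ℕ) (x : N), (2 ^ j : ℕ) • x = 0 → x = 0 := by
  intro j
  induction j with
  | zero => intro x hx; simpa using hx
  | succ k ih =>
    intro x hx
    rw [pow_succ, mul_comm, mul_smul] at hx
    exact ih x (h2 _ hx)

lemma mem_Hlt_cases (h2 : ∀ a : N, (2 : ℕ) • a = 0 → a = 0) {a x : N} (hx : x ∈ Hlt a) :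
    x = 0 ∨ ∃ b, WellOrderingRel b a ∧ x ∈ Hle b := by
  obtain ⟨j, hj⟩ := hx
  obtain ⟨F, hFS, hF⟩ := mem_closure_finset hj
  rcases finset_rmax F with rfl | ⟨b, hbF, hmax⟩
  · left
    apply h2pow h2 j
    simpa [AddSubgroup.closure_empty, AddSubgroup.mem_bot] using hF
  · right
    refine ⟨b, hFS hbF, ?_⟩
    refine sat_absorb j (mem_sat_of_mem_closure ?_)
    exact AddSubgroup.closure_mono (fun c hc => hmax c hc) hF

lemma not_mem_Hlt_bday (h2 : ∀ a : N, (2 : ℕ) • a = 0 → a = 0) {g : N} (hg : g ≠ 0) : g ∉ Hlt (bday g) := by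
  intro h
  rcases mem_Hlt_cases h2 h with rfl | ⟨b, hb, hmem⟩
  · exact hg rfl
  · exact bday_not_lt hmem hb

lemma bday_lt_of_mem_Hlt (h2 : ∀ a : N, (2 : ℕ) • a = 0 → a = 0) {g a : N} (h : g ∈ Hlt a) (hg : g ≠ 0) :
    WellOrderingRel (bday g) a := by
  rcases mem_Hlt_cases h2 h with rfl | ⟨b, hba, hmem⟩
  · exact absurd rfl hg
  · have hnb := bday_not_lt hmem
    rcases trichotomous (r := @WellOrderingRel N) (bday g) b with h' | h' | h'
    · exact rtrans h' hba
    · exact h' ▸ hba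
    · exact absurd h' hnb

/-- Canonical code of the class of `g` modulo `Hlt (bday g)`. -/
noncomputable def code (g : N) : ℕ × ℤ :=
  Classical.epsilon fun p : ℕ × ℤ =>
    (2 ^ p.1 : ℕ) • g - p.2 • (bday g) ∈ Hlt (bday g)

lemma code_exists (g : N) :
    ∃ p : ℕ × ℤ, (2 ^ p.1 : ℕ) • g - p.2 • (bday g) ∈ Hlt (bday g) := by
  obtain ⟨j, hj⟩ := mem_Hle_bday g
  have hset : {b | WellOrderingRel b (bday g) ∨ b = bday g}
      = {b | WellOrderingRel b (bday g)} ∪ {bday g} := by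
    ext c; simp [Set.mem_union, Set.mem_singleton_iff, or_comm]
  rw [hset, AddSubgroup.closure_union] at hj
  rcases AddSubgroup.mem_sup.mp hj with ⟨y, hy, z, hz, hyz⟩
  obtain ⟨m, hm⟩ := AddSubgroup.mem_closure_singleton.mp hz
  refine ⟨(j, m), ?_⟩
  have : (2 ^ j : ℕ) • g - m • (bday g) = y := by rw [hm, ← hyz]; abel
  rw [this]
  exact mem_sat_of_mem_closure hy

lemma code_spec (g : N) :
    (2 ^ (code g).1 : ℕ) • g - (code g).2 • (bday g) ∈ Hlt (bday g) :=
  Classical.epsilon_spec (code_exists g)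

lemma code_inj {x y : N} (hb : bday x = bday y) (hc : code x = code y) :
    x - y ∈ Hlt (bday x) := by
  have hx := code_spec x
  have hy := code_spec y
  rw [← hb] at hy
  rw [← hc] at hy
  have hkey : (2 ^ (code x).1 : ℕ) • (x - y)
      = ((2 ^ (code x).1 : ℕ) • x - (code x).2 • (bday x))
        - ((2 ^ (code x).1 : ℕ) • y - (code x).2 • (bday x)) := by
    rw [smul_sub]; abel
  exact Hlt_absorb _ (by rw [hkey]; exact sub_mem hx hy)

/-- Canonical representative of the class of `g` modulo `Hlt (bday g)`. -/
noncomputable def rep (g : N) : N :=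
  Classical.epsilon fun x => x - g ∈ Hlt (bday g)

lemma rep_spec (g : N) : rep g - g ∈ Hlt (bday g) :=
  Classical.epsilon_spec (p := fun x => x - g ∈ Hlt (bday g))
    ⟨g, show g - g ∈ Hlt (bday g) by rw [sub_self]; exact zero_mem _⟩

lemma rep_congr {x y : N} (hb : bday x = bday y) (hxy : x - y ∈ Hlt (bday x)) :
    rep x = rep y := by
  unfold rep
  rw [← hb]
  congr 1
  funext t
  apply propext
  constructor
  · intro h
    have heq : t - y = (t - x) + (x - y) := by abel
    rw [heq]
    exact add_mem h hxy
  · intro h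
    have : t - x = (t - y) - (x - y) := by abel
    rw [this]
    exact sub_mem h hxy

noncomputable def strip (g : N) : N := g - rep g

lemma strip_mem (g : N) : strip g ∈ Hlt (bday g) := by
  have h := neg_mem (rep_spec g)
  rwa [neg_sub] at h

/-- The recursion relation for the word construction. -/
def brel (x y : N) : Prop := y ≠ 0 ∧ (x = 0 ∨ WellOrderingRel (bday x) (bday y))

lemma brel_wf : WellFounded (@brel N _) := by
  constructor
  intro g
  have acc0 : Acc brel (0 : N) := by
    constructor
    intro z hz
    exact absurd rfl hz.1
  have H : ∀ a : N, ∀ g : N, bday g = a → Acc brel g := fun a =>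
    WellFounded.induction rwf
      (C := fun a => ∀ g : N, bday g = a → Acc brel g) a
      (fun a IH g hg => Acc.intro g (fun x hx => by
        rcases hx with ⟨_, rfl | hr⟩
        · exact acc0
        · exact IH (bday x) (hg ▸ hr) x rfl))
  exact H _ g rfl

lemma strip_brel (h2 : ∀ a : N, (2 : ℕ) • a = 0 → a = 0) {g : N} (hg : g ≠ 0) : brel (strip g) g := by
  refine ⟨hg, ?_⟩
  by_cases hs : strip g = 0
  · exact Or.inl hs
  · exact Or.inr (bday_lt_of_mem_Hlt h2 (strip_mem g) hs)

/-- The word (colour) of an element. -/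
noncomputable def word (h2 : ∀ a : N, (2 : ℕ) • a = 0 → a = 0) : N → List (ℕ × ℤ) :=
  WellFounded.fix brel_wf fun g IH =>
    if h : g = 0 then [] else IH (strip g) (strip_brel h2 h) ++ [code g]

lemma word_zero (h2 : ∀ a : N, (2 : ℕ) • a = 0 → a = 0) : word h2 (0 : N) = [] := by
  rw [word, WellFounded.fix_eq]
  simp

lemma word_eq (h2 : ∀ a : N, (2 : ℕ) • a = 0 → a = 0) {g : N} (hg : g ≠ 0) :
    word h2 g = word h2 (strip g) ++ [code g] := by
  conv_lhs => rw [word, WellFounded.fix_eq]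
  rw [dif_neg hg]
  rfl

lemma word_ne_nil (h2 : ∀ a : N, (2 : ℕ) • a = 0 → a = 0) {g : N} (hg : g ≠ 0) : word h2 g ≠ [] := by
  rw [word_eq h2 hg]
  simp

lemma eq_zero_of_word_nil (h2 : ∀ a : N, (2 : ℕ) • a = 0 → a = 0) {g : N} (hg : word h2 g = []) : g = 0 := by
  by_contra h
  exact word_ne_nil h2 h hg

/-- max of three elements in the well-order. -/
lemma rmax3 (u v w : N) :
    ∃ a, (a = u ∨ a = v ∨ a = w) ∧
      (WellOrderingRel u a ∨ u = a) ∧ (WellOrderingRel v a ∨ v = a) ∧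
      (WellOrderingRel w a ∨ w = a) := by
  have max2 : ∀ p q : N, ∃ c, (c = p ∨ c = q) ∧
      (WellOrderingRel p c ∨ p = c) ∧ (WellOrderingRel q c ∨ q = c) := by
    intro p q
    rcases trichotomous (r := @WellOrderingRel N) p q with h | h | h
    · exact ⟨q, Or.inr rfl, Or.inl h, Or.inr rfl⟩
    · exact ⟨q, Or.inr rfl, Or.inr h, Or.inr rfl⟩
    · exact ⟨p, Or.inl rfl, Or.inr rfl, Or.inl h⟩
  obtain ⟨c, hc, hu, hv⟩ := max2 u v
  obtain ⟨a, ha, hca, hwa⟩ := max2 c w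
  have le_trans : ∀ {p : N}, (WellOrderingRel p c ∨ p = c) →
      (WellOrderingRel p a ∨ p = a) := by
    rintro p (hp | rfl)
    · rcases hca with h | rfl
      · exact Or.inl (rtrans hp h)
      · exact Or.inl hp
    · exact hca
  refine ⟨a, ?_, le_trans hu, le_trans hv, hwa⟩
  rcases ha with rfl | rfl
  · rcases hc with rfl | rfl
    · exact Or.inl rfl
    · exact Or.inr (Or.inl rfl)
  · exact Or.inr (Or.inr rfl)

/-- Key lemma: if `x + y = 2z` and all three have the same word, then `x = y`. -/
lemma key (h2 : ∀ a : N, (2 : ℕ) • a = 0 → a = 0) : ∀ n : ℕ, ∀ x y z : N, x + y = (2 : ℕ) • z →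
    word h2 x = word h2 y → word h2 x = word h2 z →
    (word h2 x).length = n → x = y := by
  intro n
  induction n using Nat.strong_induction_on with
  | _ n IH =>
    intro x y z hsum hxy hxz hlen
    by_cases hx0 : x = 0
    · subst hx0
      have : word h2 y = [] := by rw [← hxy, word_zero]
      rw [eq_zero_of_word_nil h2 this]
    have hy0 : y ≠ 0 := by
      intro h
      exact hx0 (eq_zero_of_word_nil h2 (by rw [hxy, h, word_zero]))
    have hz0 : z ≠ 0 := by
      intro h
      exact hx0 (eq_zero_of_word_nil h2 (by rw [hxz, h, word_zero]))
    obtain ⟨a, haeq, hax, hay, haz⟩ := rmax3 (bday x) (bday y) (bday z)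
    -- membership dichotomy
    have key_mem : ∀ g : N, (WellOrderingRel (bday g) a ∨ bday g = a) →
        g ∈ Hlt a ∨ bday g = a := by
      rintro g (h | h)
      · exact Or.inl (Hle_le_Hlt h (mem_Hle_bday g))
      · exact Or.inr h
    have not_both : ∀ g : N, g ≠ 0 → bday g = a → g ∉ Hlt a := by
      intro g hg hba
      rw [← hba]
      exact not_mem_Hlt_bday h2 hg
    -- code equality from word equality
    have lc : ∀ g g' : N, g ≠ 0 → g' ≠ 0 → bday g = a → bday g' = a →
        word h2 g = word h2 g' → g - g' ∈ Hlt a := by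
      intro g g' hg hg' hbg hbg' hww
      rw [word_eq h2 hg, word_eq h2 hg'] at hww
      have hc : code g = code g' := by
        have := (List.append_inj' hww rfl).2
        simpa using this
      have := code_inj (hbg.trans hbg'.symm) hc
      rwa [hbg] at this
    by_cases hx : x ∈ Hlt a <;> by_cases hy : y ∈ Hlt a <;> by_cases hz : z ∈ Hlt a
    -- all in: contradiction with the max birthday
    · rcases haeq with h | h | h
      · exact absurd hx (not_both x hx0 h.symm)
      · exact absurd hy (not_both y hy0 h.symm)
      · exact absurd hz (not_both z hz0 h.symm)
    -- x, y in, z out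
    · have h2z : (2 : ℕ) • z ∈ Hlt a := hsum ▸ add_mem hx hy
      exact absurd (Hlt_absorb2 h2z) hz
    -- x, z in, y out
    · have hy' : y = (2 : ℕ) • z - x := by rw [← hsum]; abel
      exact absurd (hy' ▸ sub_mem (AddSubgroup.nsmul_mem _ hz 2) hx) hy
    -- x in, y z out
    · have hby : bday y = a := (key_mem y hay).resolve_left hy
      have hbz : bday z = a := (key_mem z haz).resolve_left hz
      have hyz : y - z ∈ Hlt a := lc y z hy0 hz0 hby hbz (hxy.symm.trans hxz)
      have hzeq : x + (y - z) = z := by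
        have h1 : x + (y - z) = (x + y) - z := by abel
        rw [h1, hsum, two_nsmul]; abel
      exact absurd (hzeq ▸ add_mem hx hyz) hz
    -- y, z in, x out
    · have hx' : x = (2 : ℕ) • z - y := by rw [← hsum]; abel
      exact absurd (hx' ▸ sub_mem (AddSubgroup.nsmul_mem _ hz 2) hy) hx
    -- y in, x z out
    · have hbx : bday x = a := (key_mem x hax).resolve_left hx
      have hbz : bday z = a := (key_mem z haz).resolve_left hz
      have hxz' : x - z ∈ Hlt a := lc x z hx0 hz0 hbx hbz hxz
      have hzeq : y + (x - z) = z := by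
        have h1 : y + (x - z) = (x + y) - z := by abel
        rw [h1, hsum, two_nsmul]; abel
      exact absurd (hzeq ▸ add_mem hy hxz') hz
    -- z in, x y out
    · have hbx : bday x = a := (key_mem x hax).resolve_left hx
      have hby : bday y = a := (key_mem y hay).resolve_left hy
      have hxy' : x - y ∈ Hlt a := lc x y hx0 hy0 hbx hby hxy
      have h2x : (2 : ℕ) • x ∈ Hlt a := by
        have heq : (2 : ℕ) • x = (x - y) + (x + y) := by rw [two_nsmul]; abel
        rw [heq, hsum]
        exact add_mem hxy' (AddSubgroup.nsmul_mem _ hz 2)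
      exact absurd (Hlt_absorb2 h2x) hx
    -- all out: strip
    · have hbx : bday x = a := (key_mem x hax).resolve_left hx
      have hby : bday y = a := (key_mem y hay).resolve_left hy
      have hbz : bday z = a := (key_mem z haz).resolve_left hz
      have hxy' : x - y ∈ Hlt a := lc x y hx0 hy0 hbx hby hxy
      have hxz' : x - z ∈ Hlt a := lc x z hx0 hz0 hbx hbz hxz
      have rxy : rep x = rep y := rep_congr (hbx.trans hby.symm) (by rwa [hbx])
      have rxz : rep x = rep z := rep_congr (hbx.trans hbz.symm) (by rwa [hbx])
      have hsum' : strip x + strip y = (2 : ℕ) • strip z := by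
        unfold strip
        rw [← rxy, ← rxz, smul_sub, ← hsum, two_nsmul]
        abel
      have hwx := word_eq h2 hx0
      have hwy := word_eq h2 hy0
      have hwz := word_eq h2 hz0
      have wxy : word h2 (strip x) = word h2 (strip y) := by
        have h := hxy
        rw [hwx, hwy] at h
        exact (List.append_inj' h rfl).1
      have wxz : word h2 (strip x) = word h2 (strip z) := by
        have h := hxz
        rw [hwx, hwz] at h
        exact (List.append_inj' h rfl).1
      have hlen' : (word h2 (strip x)).length + 1 = n := by
        rw [hwx] at hlen
        simpa using hlen
      have hstrip := IH (word h2 (strip x)).length (by omega) (strip x) (strip y)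
        (strip z) hsum' wxy wxz rfl
      have hxy2 : x - rep x = y - rep x := by
        have h' := hstrip
        unfold strip at h'
        rwa [← rxy] at h'
      have h'' := congrArg (· + rep x) hxy2
      simpa using h''

end Stmt0Aux

/-- An abelian group with no elements of order 4 admits a countable
colouring with no monochromatic `{2x, 2y, x+y}` for distinct `x, y`. -/
theorem stmt_0 (G : Type*) [AddCommGroup G]
    (h4 : ∀ a : G, (4 : ℕ) • a = 0 → (2 : ℕ) • a = 0) :
    ∃ c : G → ℕ, ∀ x y : G, x ≠ y →
      ¬ (c ((2 : ℕ) • x) = c ((2 : ℕ) • y) ∧ c ((2 : ℕ) • y) = c (x + y)) := by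
  classical
  -- the subgroup of elements of order dividing 2
  set K : AddSubgroup G :=
    { carrier := {g | (2 : ℕ) • g = 0}
      zero_mem' := by simp
      add_mem' := by
        intro a b ha hb
        simp only [Set.mem_setOf_eq] at *
        rw [smul_add, ha, hb, add_zero]
      neg_mem' := by
        intro a ha
        simp only [Set.mem_setOf_eq] at *
        rw [smul_neg, ha, neg_zero] } with hK
  have memK : ∀ g : G, g ∈ K ↔ (2 : ℕ) • g = 0 := fun g => Iff.rfl
  let φ : G →+ G ⧸ K := QuotientAddGroup.mk' K
  have h2 : ∀ a : G ⧸ K, (2 : ℕ) • a = 0 → a = 0 := by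
    intro a ha
    induction a using QuotientAddGroup.induction_on with
    | _ x =>
      have : ((2 : ℕ) • x : G) ∈ K := by
        rw [← QuotientAddGroup.eq_zero_iff]
        rw [← ha]
        exact (map_nsmul φ 2 x).symm
      rw [memK] at this
      have h4' : (4 : ℕ) • x = 0 := by
        rw [smul_smul] at this
        norm_num at this
        exact this
      have := h4 x h4'
      exact QuotientAddGroup.eq_zero_iff x |>.mpr this
  -- the colouring
  let wcol : G ⧸ K → List (ℕ × ℤ) := Stmt0Aux.word h2
  let c : G → ℕ := fun g =>
    Nat.pair (if ∃ u : G, (2 : ℕ) • u = g then 0 else 1)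
      (Encodable.encode (wcol (φ g)))
  refine ⟨c, ?_⟩
  rintro x y hxy ⟨hc1, hc2⟩
  have e1 := Nat.pair_eq_pair.mp hc1
  have e2 := Nat.pair_eq_pair.mp hc2
  have hw1 : wcol (φ ((2 : ℕ) • x)) = wcol (φ ((2 : ℕ) • y)) :=
    Encodable.encode_injective e1.2
  have hw2 : wcol (φ ((2 : ℕ) • y)) = wcol (φ (x + y)) :=
    Encodable.encode_injective e2.2
  -- apply the key lemma in the quotient
  have hsum : φ ((2 : ℕ) • x) + φ ((2 : ℕ) • y) = (2 : ℕ) • φ (x + y) := by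
    rw [← map_add, ← map_nsmul]
    congr 1
    rw [smul_add]
  have hXY : φ ((2 : ℕ) • x) = φ ((2 : ℕ) • y) :=
    Stmt0Aux.key h2 (wcol (φ ((2 : ℕ) • x))).length
      (φ ((2 : ℕ) • x)) (φ ((2 : ℕ) • y)) (φ (x + y)) hsum hw1 (hw1.trans hw2) rfl
  -- deduce x - y ∈ K
  have hdK : x - y ∈ K := by
    have : (2 : ℕ) • x - (2 : ℕ) • y ∈ K := by
      rw [← QuotientAddGroup.eq_zero_iff, ← QuotientAddGroup.mk'_apply, map_sub]
      show φ _ - φ _ = 0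
      rw [hXY, sub_self]
    rw [memK] at this ⊢
    have h4' : (4 : ℕ) • (x - y) = 0 := by
      have heq : (2 : ℕ) • ((2 : ℕ) • x - (2 : ℕ) • y) = (4 : ℕ) • (x - y) := by
        rw [← smul_sub, smul_smul]
        norm_num
      rw [← heq, this]
    exact h4 _ h4'
  -- bits: x + y is a double
  have hbit : ∃ u : G, (2 : ℕ) • u = x + y := by
    have hb1 : (if ∃ u : G, (2 : ℕ) • u = (2 : ℕ) • x then 0 else 1) = 0 :=
      if_pos ⟨x, rfl⟩
    have := (e2.1.symm.trans e1.1.symm).trans hb1  -- bit (x+y) = 0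
    by_contra hno
    rw [if_neg hno] at this
    exact one_ne_zero this
  obtain ⟨u, hu⟩ := hbit
  -- now derive a contradiction
  have hd2 : (2 : ℕ) • (x - y) = 0 := (memK _).mp hdK
  have hdu : x - y = (2 : ℕ) • (x - u) := by
    have : (2 : ℕ) • x - (x + y) = x - y := by rw [two_nsmul]; abel
    rw [← this, ← hu, smul_sub]
  have h4u : (4 : ℕ) • (x - u) = 0 := by
    have h5 : (2 : ℕ) • ((2 : ℕ) • (x - u)) = 0 := by rw [← hdu, hd2]
    rw [smul_smul] at h5
    norm_num at h5
    exact h5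
  have : x - y = 0 := by rw [hdu]; exact h4 _ h4u
  exact hxy (by rwa [sub_eq_zero] at this)
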